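/- For every x ∈ X there exists a subset S ⊆ Y(x) with |S| ≤ n_ξ + 1 such that sup_{ξ∈U} min_{y∈S} f(x,y,ξ) = sup_{ξ∈U} min_{y∈Y(x)} f(x,y,ξ); that is, at most n_ξ + 1 of the second-stage solutions suffice to attain the worst-case value for x. -/

import Mathlib

/-- Worst-case value `sup_{ξ ∈ U} min_{y ∈ S} F(y, ξ)` (minimum written as `sInf` of the image,
which is the minimum for a finite nonempty `S`). -/
noncomputable def worstVal {Eξ Ey : Type*} (U : Set Eξ) (S : Set Ey) (F : Ey → Eξ → ℝ) : ℝ :=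
  sSup ((fun ξ => sInf ((fun y => F y ξ) '' S)) '' U)

lemma worstVal_eq_of_le {Eξ Ey : Type*} {U : Set Eξ} {S T : Set Ey} {F : Ey → Eξ → ℝ}
    (hST : S ⊆ T) (hS : S.Nonempty) (hT : T.Finite) (hU : U.Nonempty)
    (hle : ∀ ξ ∈ U, sInf ((fun y => F y ξ) '' S) ≤ worstVal U T F)
    (hξ₀ : ∃ ξ₀ ∈ U, worstVal U T F = sInf ((fun y => F y ξ₀) '' T)) :
    worstVal U S F = worstVal U T F := by
  obtain ⟨ξ₀, hξ₀U, hξ₀v⟩ := hξ₀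
  set v := worstVal U T F with hv
  have hbdd : BddAbove ((fun ξ => sInf ((fun y => F y ξ) '' S)) '' U) := by
    refine ⟨v, ?_⟩
    rintro z ⟨ξ, hξ, rfl⟩
    exact hle ξ hξ
  apply le_antisymm
  · exact csSup_le (hU.image _) (by rintro z ⟨ξ, hξ, rfl⟩; exact hle ξ hξ)
  · calc v = sInf ((fun y => F y ξ₀) '' T) := hξ₀v
      _ ≤ sInf ((fun y => F y ξ₀) '' S) :=
        csInf_le_csInf (hT.image _).bddBelow (hS.image _) (Set.image_mono hST)
      _ ≤ worstVal U S F := le_csSup hbdd ⟨ξ₀, hξ₀U, rfl⟩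

/-- For every first-stage decision `x ∈ X` there is a subset `S ⊆ Y(x)` of at
most `n_ξ + 1` second-stage solutions whose worst-case value equals that of the full set `Y(x)`. -/
theorem stmt_2 (nx ny nξ : ℕ) (hnx : 0 < nx) (hny : 0 < ny) (hnξ : 0 < nξ)
    (X : Set (EuclideanSpace ℝ (Fin nx))) (hXcomp : IsCompact X) (hXne : X.Nonempty)
    (Y : Set (EuclideanSpace ℝ (Fin ny))) (hYfin : Y.Finite) (hYne : Y.Nonempty)
    (hYint : ∀ y ∈ Y, ∀ i, ∃ z : ℤ, y i = (z : ℝ))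
    (Yx : EuclideanSpace ℝ (Fin nx) → Set (EuclideanSpace ℝ (Fin ny)))
    (hYxsub : ∀ x ∈ X, Yx x ⊆ Y) (hYxne : ∀ x ∈ X, (Yx x).Nonempty)
    (U : Set (EuclideanSpace ℝ (Fin nξ))) (hUcomp : IsCompact U) (hUconv : Convex ℝ U)
    (hUne : U.Nonempty)
    (f : EuclideanSpace ℝ (Fin nx) → EuclideanSpace ℝ (Fin ny) →
      EuclideanSpace ℝ (Fin nξ) → ℝ)
    (hfcont : Continuous fun p : EuclideanSpace ℝ (Fin nx) × EuclideanSpace ℝ (Fin ny) ×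
      EuclideanSpace ℝ (Fin nξ) => f p.1 p.2.1 p.2.2)
    (hconc : ∀ x ∈ X, ∀ y ∈ Y, ConcaveOn ℝ U (f x y)) :
    ∀ x ∈ X, ∃ S : Set (EuclideanSpace ℝ (Fin ny)), S ⊆ Yx x ∧ S.Nonempty ∧ S.Finite ∧
      S.ncard ≤ nξ + 1 ∧ worstVal U S (f x) = worstVal U (Yx x) (f x) := by
  classical
  intro x hx
  have hTfin : (Yx x).Finite := hYfin.subset (hYxsub x hx)
  have hTne : (Yx x).Nonempty := hYxne x hx
  set Tf : Finset (EuclideanSpace ℝ (Fin ny)) := hTfin.toFinset with hTf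
  have hTfc : (Tf : Set (EuclideanSpace ℝ (Fin ny))) = Yx x := hTfin.coe_toFinset
  have hTfne : Tf.Nonempty := by
    rwa [← Finset.coe_nonempty, hTfc]
  -- the min function and its continuity
  have hinf_eq : ∀ (s : Finset (EuclideanSpace ℝ (Fin ny))) (hs : s.Nonempty) ξ,
      sInf ((fun y => f x y ξ) '' (s : Set _)) = s.inf' hs (fun y => f x y ξ) := by
    intro s hs ξ
    rw [Finset.inf'_eq_csInf_image]
  have hfc : ∀ y, Continuous (fun ξ => f x y ξ) := by
    intro y
    exact hfcont.comp (continuous_const.prodMk (continuous_const.prodMk continuous_id))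
  have hgcont : ContinuousOn (fun ξ => Tf.inf' hTfne (fun y => f x y ξ)) U :=
    ContinuousOn.finset_inf'_apply hTfne (fun i _ => (hfc i).continuousOn)
  obtain ⟨ξ₀, hξ₀U, hξ₀eq, hξ₀ge⟩ := hUcomp.exists_sSup_image_eq_and_ge hUne hgcont
  set v : ℝ := worstVal U (Yx x) (f x) with hv
  have hveq : v = Tf.inf' hTfne (fun y => f x y ξ₀) := by
    rw [hv, worstVal, ← hξ₀eq]
    congr 1
    ext ξ
    simp only [Set.mem_image]
    constructor <;> (rintro ⟨ξ', hξ', rfl⟩; exact ⟨ξ', hξ', by rw [← hTfc, hinf_eq]⟩)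
  have hgle : ∀ ξ ∈ U, sInf ((fun y => f x y ξ) '' (Yx x)) ≤ v := by
    intro ξ hξ
    rw [← hTfc, hinf_eq Tf hTfne, hveq]
    exact hξ₀ge ξ hξ
  have hexi : ∃ ξ₀ ∈ U, worstVal U (Yx x) (f x) = sInf ((fun y => f x y ξ₀) '' (Yx x)) := by
    refine ⟨ξ₀, hξ₀U, ?_⟩
    rw [← hv, hveq, ← hTfc, hinf_eq Tf hTfne]
  -- case split on the size of Yx x
  by_cases hcard : (Yx x).ncard ≤ nξ + 1
  · exact ⟨Yx x, le_refl _, hTne, hTfin, hcard, rfl⟩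
  · -- Helly's theorem argument
    set A : EuclideanSpace ℝ (Fin ny) → Set (EuclideanSpace ℝ (Fin nξ)) :=
      fun y => {ξ ∈ U | v < f x y ξ} with hA
    have hAconv : ∀ y ∈ Tf, Convex ℝ (A y) := by
      intro y hy
      have : y ∈ Y := hYxsub x hx (hTfc ▸ Finset.mem_coe.mpr hy)
      exact (hconc x hx y this).convex_gt v
    have hAempty : ¬ (⋂ y ∈ Tf, A y).Nonempty := by
      rintro ⟨ξ, hξ⟩
      simp only [Set.mem_iInter] at hξ
      obtain ⟨y₀, hy₀⟩ := id hTfne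
      have hξU : ξ ∈ U := (hξ y₀ hy₀).1
      have : v < Tf.inf' hTfne (fun y => f x y ξ) := by
        rw [Finset.lt_inf'_iff]
        exact fun y hy => (hξ y hy).2
      have h2 := hgle ξ hξU
      rw [← hTfc, hinf_eq Tf hTfne] at h2
      exact lt_irrefl _ (lt_of_le_of_lt h2 this)
    have hrank : Module.finrank ℝ (EuclideanSpace ℝ (Fin nξ)) = nξ :=
      finrank_euclideanSpace_fin
    have : ¬ ∀ I ⊆ Tf, I.card ≤ Module.finrank ℝ (EuclideanSpace ℝ (Fin nξ)) + 1 →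
        (⋂ i ∈ I, A i).Nonempty := by
      intro h
      exact hAempty (Convex.helly_theorem' hAconv h)
    push_neg at this
    obtain ⟨I, hIss, hIcard, hIempty⟩ := this
    rw [hrank] at hIcard
    have hIne : I.Nonempty := by
      rcases I.eq_empty_or_nonempty with h | h
      · exfalso
        rw [h] at hIempty
        simp only [Finset.notMem_empty, Set.iInter_of_empty, Set.iInter_univ] at hIempty
        exact (Set.univ_nonempty (α := EuclideanSpace ℝ (Fin nξ))).ne_empty hIempty
      · exact h
    refine ⟨(I : Set _), ?_, hIne.to_set, I.finite_toSet, ?_, ?_⟩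
    · rw [← hTfc]; exact Finset.coe_subset.mpr hIss
    · rw [Set.ncard_coe_finset]; exact hIcard
    · apply worstVal_eq_of_le (by rw [← hTfc]; exact Finset.coe_subset.mpr hIss)
        hIne.to_set hTfin hUne _ hexi
      intro ξ hξ
      have : ξ ∉ ⋂ i ∈ I, A i := by rw [hIempty]; exact Set.notMem_empty ξ
      simp only [Set.mem_iInter, not_forall] at this
      obtain ⟨y, hyI, hyA⟩ := this
      have hle : f x y ξ ≤ v := by
        by_contra h
        exact hyA ⟨hξ, not_le.mp h⟩
      calc sInf ((fun y => f x y ξ) '' (I : Set _)) ≤ f x y ξ :=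
            csInf_le (I.finite_toSet.image _).bddBelow ⟨y, hyI, rfl⟩
        _ ≤ v := hle
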